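/- If t is a simply typed λ-term whose redexes all have degree at most d, then the d-fold iterated parallel reduct t*^d is the β-normal form of t. -/

import Mathlib

/-- Simple types over a single base type `o`. -/
inductive Ty : Type
  | o : Ty
  | arr : Ty → Ty → Ty
deriving DecidableEq

/-- Degree of a simple type: the height of its syntax tree. -/
def Ty.deg : Ty → Nat
  | .o => 0
  | .arr a b => max a.deg b.deg + 1

/-- Church-style simply typed λ-terms (de Bruijn indices, annotated λ). -/
inductive CTm : Type
  | var : Nat → CTm
  | lam : Ty → CTm → CTm
  | app : CTm → CTm → CTm
deriving DecidableEq

namespace CTm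

def lift (d : Nat) : Nat → CTm → CTm
  | k, var n => if n < k then var n else var (n + d)
  | k, lam A t => lam A (lift d (k + 1) t)
  | k, app t u => app (lift d k t) (lift d k u)

def subst : CTm → Nat → CTm → CTm
  | var n, k, u => if n = k then lift k 0 u else if k < n then var (n - 1) else var n
  | lam A t, k, u => lam A (subst t (k + 1) u)
  | app a b, k, u => app (subst a k u) (subst b k u)

/-- Full parallel reduction `t*`. -/
def pstar : CTm → CTm
  | var n => var n
  | lam A t => lam A (pstar t)
  | app (lam _ t) u => subst (pstar t) 0 (pstar u)
  | app (var n) u => app (var n) (pstar u)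
  | app (app a b) u => app (pstar (app a b)) (pstar u)

/-- Type of a term in a context (de Bruijn): `some A` iff well-typed of type `A`. -/
def typeof : List Ty → CTm → Option Ty
  | Γ, var n => Γ[n]?
  | Γ, lam A t => (typeof (A :: Γ) t).map (Ty.arr A)
  | Γ, app t u =>
    match typeof Γ t, typeof Γ u with
    | some (.arr A B), some A' => if A = A' then some B else none
    | _, _ => none

/-- All redexes of `t` (in context `Γ`) have degree at most `d`.
The degree of a redex `(λx^A.t) u` with `t : B` is `deg (A → B)`. -/
def RedexBound (d : Nat) : List Ty → CTm → Prop
  | _, var _ => True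
  | Γ, lam A t => RedexBound d (A :: Γ) t
  | Γ, app (lam A t) u =>
      (∀ B, typeof (A :: Γ) t = some B → (Ty.arr A B).deg ≤ d) ∧
        RedexBound d (A :: Γ) t ∧ RedexBound d Γ u
  | Γ, app (var n) u => RedexBound d Γ (var n) ∧ RedexBound d Γ u
  | Γ, app (app a b) u => RedexBound d Γ (app a b) ∧ RedexBound d Γ u

/-- β-normal: contains no redex. -/
def Normal : CTm → Prop
  | var _ => True
  | lam _ t => Normal t
  | app t u => (∀ A t', t ≠ lam A t') ∧ Normal t ∧ Normal u

/-- Single-step β-reduction. -/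
inductive Step : CTm → CTm → Prop
  | beta (A : Ty) (t u : CTm) : Step (app (lam A t) u) (subst t 0 u)
  | appL {t t' : CTm} (u : CTm) : Step t t' → Step (app t u) (app t' u)
  | appR (t : CTm) {u u' : CTm} : Step u u' → Step (app t u) (app t u')
  | lam (A : Ty) {t t' : CTm} : Step t t' → Step (lam A t) (lam A t')

/-- β-convertibility. -/
def Conv : CTm → CTm → Prop := Relation.EqvGen Step

end CTm



namespace CTm

theorem typeof_lift (Ξ : List Ty) :
    ∀ (t : CTm) (Δ Γ : List Ty),
      typeof (Δ ++ Ξ ++ Γ) (lift Ξ.length Δ.length t) = typeof (Δ ++ Γ) t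
  | var n, Δ, Γ => by
    simp only [lift]
    split
    · simp only [typeof, List.append_assoc]
      rw [List.getElem?_append_left (by omega), List.getElem?_append_left (by omega)]
    · have h : ¬ n < Δ.length := by assumption
      simp only [typeof, List.append_assoc]
      rw [List.getElem?_append_right (l₁ := Δ) (by omega),
        List.getElem?_append_right (l₁ := Δ) (by omega),
        List.getElem?_append_right (l₁ := Ξ) (by omega)]
      congr 1
      omega
  | lam A t, Δ, Γ => by
    simpa only [lift, typeof, List.cons_append, List.length_cons] using
      congrArg (Option.map (Ty.arr A)) (typeof_lift Ξ t (A :: Δ) Γ)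
  | app a b, Δ, Γ => by
    simp only [lift, typeof, typeof_lift Ξ a Δ Γ, typeof_lift Ξ b Δ Γ]

theorem typeof_subst {Γ : List Ty} {u : CTm} {A : Ty} (hu : typeof Γ u = some A) :
    ∀ (t : CTm) (Δ : List Ty),
      typeof (Δ ++ Γ) (subst t Δ.length u) = typeof (Δ ++ A :: Γ) t
  | var n, Δ => by
    simp only [subst, typeof]
    split
    · subst_vars
      have := typeof_lift Δ u [] Γ
      simp only [List.nil_append, List.length_nil] at this
      rw [this, hu, List.getElem?_append_right (le_refl _)]
      simp
    · split
      · simp only [typeof]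
        rw [List.getElem?_append_right (l₁ := Δ) (by omega),
          List.getElem?_append_right (l₁ := Δ) (by omega)]
        have h1 : n - Δ.length = (n - 1 - Δ.length) + 1 := by omega
        rw [h1]
        simp
      · simp only [typeof]
        rw [List.getElem?_append_left (by omega), List.getElem?_append_left (by omega)]
  | lam B t, Δ => by
    simpa only [subst, typeof, List.cons_append, List.length_cons] using
      congrArg (Option.map (Ty.arr B)) (typeof_subst hu t (B :: Δ))
  | app a b, Δ => by
    simp only [subst, typeof, typeof_subst hu a Δ, typeof_subst hu b Δ]

end CTm

namespace CTm

theorem typeof_app_elim {Γ : List Ty} {a b : CTm} {C : Ty}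
    (h : typeof Γ (app a b) = some C) :
    ∃ A, typeof Γ a = some (Ty.arr A C) ∧ typeof Γ b = some A := by
  simp only [typeof] at h
  split at h
  · next A B A' ha hb =>
      split at h
      · next heq =>
          cases h
          exact ⟨A', by rw [ha, heq], by rw [hb, ← heq]⟩
      · exact absurd h (by simp)
  · exact absurd h (by simp)

theorem typeof_lam_elim {Γ : List Ty} {B : Ty} {s : CTm} {C : Ty}
    (h : typeof Γ (lam B s) = some C) :
    ∃ D, typeof (B :: Γ) s = some D ∧ C = Ty.arr B D := by
  simp only [typeof] at h
  obtain ⟨D, hD, hE⟩ := Option.map_eq_some_iff.mp h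
  exact ⟨D, hD, hE.symm⟩

theorem typeof_pstar : ∀ (t : CTm) {Γ : List Ty} {A : Ty},
    typeof Γ t = some A → typeof Γ (pstar t) = some A
  | var _, _, _, h => h
  | lam B t, Γ, A, h => by
      obtain ⟨D, hD, rfl⟩ := typeof_lam_elim h
      simp only [pstar, typeof, typeof_pstar t hD, Option.map_some]
  | app (var n) b, Γ, A, h => by
      obtain ⟨B, ha, hb⟩ := typeof_app_elim h
      simp only [typeof] at ha
      simp only [pstar, typeof]
      rw [ha, typeof_pstar b hb]
      simp
  | app (lam B s) b, Γ, A, h => by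
      obtain ⟨B', ha, hb⟩ := typeof_app_elim h
      obtain ⟨D, hD, hE⟩ := typeof_lam_elim ha
      injection hE with h1 h2
      subst h1; subst h2
      simp only [pstar]
      have := typeof_subst (typeof_pstar b hb) (pstar s) []
      simp only [List.nil_append, List.length_nil] at this
      rw [this]
      exact typeof_pstar s hD
  | app (app a₁ a₂) b, Γ, A, h => by
      obtain ⟨B, ha, hb⟩ := typeof_app_elim h
      simp only [pstar, typeof]
      rw [typeof_pstar (app a₁ a₂) ha, typeof_pstar b hb]
      simp

theorem rb_lift (Ξ : List Ty) {d : Nat} : ∀ (t : CTm) (Δ Γ : List Ty),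
    RedexBound d (Δ ++ Γ) t → RedexBound d (Δ ++ Ξ ++ Γ) (lift Ξ.length Δ.length t)
  | var n, Δ, Γ, h => by simp only [lift]; split <;> trivial
  | lam A t, Δ, Γ, h => by
      simp only [lift, RedexBound]
      exact rb_lift Ξ t (A :: Δ) Γ h
  | app (var n) b, Δ, Γ, h => by
      have hb := rb_lift Ξ b Δ Γ h.2
      simp only [lift]
      split <;> exact ⟨trivial, hb⟩
  | app (lam A s) b, Δ, Γ, h => by
      obtain ⟨hdeg, hs, hb⟩ := h
      refine ⟨?_, rb_lift Ξ s (A :: Δ) Γ hs, rb_lift Ξ b Δ Γ hb⟩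
      intro B hB
      apply hdeg
      rw [← hB]
      exact (typeof_lift Ξ s (A :: Δ) Γ).symm
  | app (app a₁ a₂) b, Δ, Γ, h =>
      ⟨rb_lift Ξ (app a₁ a₂) Δ Γ h.1, rb_lift Ξ b Δ Γ h.2⟩

theorem rb_app {d : Nat} {Γ : List Ty} {X Y : CTm} {B : Ty}
    (hX : RedexBound d Γ X) (hY : RedexBound d Γ Y)
    (hXt : typeof Γ X = some B) (hdeg : ∀ A' s', X = lam A' s' → B.deg ≤ d) :
    RedexBound d Γ (app X Y) := by
  cases X with
  | var n => exact ⟨trivial, hY⟩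
  | app a b => exact ⟨hX, hY⟩
  | lam A' s' =>
      refine ⟨?_, hX, hY⟩
      intro C hC
      simp only [typeof, hC, Option.map_some, Option.some.injEq] at hXt
      rw [hXt]
      exact hdeg A' s' rfl

theorem rb_subst {Γ : List Ty} {u : CTm} {A : Ty} {d : Nat}
    (hu : typeof Γ u = some A) (hru : RedexBound d Γ u) (hA : A.deg ≤ d) :
    ∀ (t : CTm) (Δ : List Ty),
      RedexBound d (Δ ++ A :: Γ) t → RedexBound d (Δ ++ Γ) (subst t Δ.length u)
  | var n, Δ, h => by
      simp only [subst]
      split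
      · exact rb_lift Δ u [] Γ hru
      · split <;> trivial
  | lam B t, Δ, h => by
      simp only [subst, RedexBound]
      exact rb_subst hu hru hA t (B :: Δ) h
  | app (var n) b, Δ, h => by
      have hb := rb_subst hu hru hA b Δ h.2
      simp only [subst]
      split
      · refine rb_app (rb_lift Δ u [] Γ hru) hb ?_ (fun _ _ _ => hA)
        have := typeof_lift Δ u [] Γ
        simp only [List.nil_append, List.length_nil] at this
        rw [this, hu]
      · split <;> exact ⟨trivial, hb⟩
  | app (lam B s) b, Δ, h => by
      obtain ⟨hdeg, hs, hb⟩ := h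
      exact ⟨fun C hC => hdeg C (by rw [← hC]; exact (typeof_subst hu s (B :: Δ)).symm),
        rb_subst hu hru hA s (B :: Δ) hs, rb_subst hu hru hA b Δ hb⟩
  | app (app a₁ a₂) b, Δ, h =>
      ⟨rb_subst hu hru hA (app a₁ a₂) Δ h.1, rb_subst hu hru hA b Δ h.2⟩

theorem rb_pstar {d : Nat} : ∀ (t : CTm) {Γ : List Ty} {A : Ty},
    typeof Γ t = some A → RedexBound (d + 1) Γ t → RedexBound d Γ (pstar t)
  | var _, _, _, _, _ => trivial
  | lam B t, Γ, A, ht, hb => by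
      obtain ⟨D, hD, _⟩ := typeof_lam_elim ht
      exact rb_pstar t hD hb
  | app (var n) b, Γ, A, ht, hb => by
      obtain ⟨B, _, hbt⟩ := typeof_app_elim ht
      exact ⟨trivial, rb_pstar b hbt hb.2⟩
  | app (lam B s) b, Γ, A, ht, hb => by
      obtain ⟨B', ha, hbt⟩ := typeof_app_elim ht
      obtain ⟨D, hD, hE⟩ := typeof_lam_elim ha
      injection hE with h1 h2
      subst h1; subst h2
      obtain ⟨hdeg, hs, hbb⟩ := hb
      have hdegB : B'.deg ≤ d := by
        have := hdeg _ hD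
        simp only [Ty.deg] at this
        omega
      have := rb_subst (typeof_pstar b hbt) (rb_pstar b hbt hbb) hdegB (pstar s) []
        (rb_pstar s hD hs)
      simpa [pstar] using this
  | app (app a₁ a₂) b, Γ, A, ht, hb => by
      obtain ⟨B, ha, hbt⟩ := typeof_app_elim ht
      refine rb_app (rb_pstar (app a₁ a₂) ha hb.1) (rb_pstar b hbt hb.2)
        (typeof_pstar (app a₁ a₂) ha) ?_
      intro A' s' hlam
      cases a₁ with
      | var m => simp [pstar] at hlam
      | app x y => simp [pstar] at hlam
      | lam B₁ s₁ =>
          obtain ⟨B₂, ha₁, _⟩ := typeof_app_elim ha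
          obtain ⟨C₁, hC₁, hE₁⟩ := typeof_lam_elim ha₁
          injection hE₁ with g1 g2
          subst g1; subst g2
          have := hb.1.1 _ hC₁
          simp only [Ty.deg] at this ⊢
          omega

theorem normal_rb0 : ∀ (t : CTm) {Γ : List Ty} {A : Ty},
    typeof Γ t = some A → RedexBound 0 Γ t → Normal t
  | var _, _, _, _, _ => trivial
  | lam B t, Γ, A, ht, hb => by
      obtain ⟨D, hD, _⟩ := typeof_lam_elim ht
      exact normal_rb0 t hD hb
  | app (var n) b, Γ, A, ht, hb => by
      obtain ⟨B, _, hbt⟩ := typeof_app_elim ht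
      exact ⟨fun _ _ h => CTm.noConfusion h, ⟨trivial, normal_rb0 b hbt hb.2⟩⟩
  | app (lam B s) b, Γ, A, ht, hb => by
      obtain ⟨B', ha, _⟩ := typeof_app_elim ht
      obtain ⟨D, hD, _⟩ := typeof_lam_elim ha
      have := hb.1 _ hD
      simp [Ty.deg] at this
  | app (app a₁ a₂) b, Γ, A, ht, hb => by
      obtain ⟨B, ha, hbt⟩ := typeof_app_elim ht
      exact ⟨fun _ _ h => CTm.noConfusion h, ⟨normal_rb0 (app a₁ a₂) ha hb.1,
        normal_rb0 b hbt hb.2⟩⟩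

theorem stepsAppL {t t' : CTm} (u : CTm) (h : Relation.ReflTransGen Step t t') :
    Relation.ReflTransGen Step (app t u) (app t' u) := by
  induction h with
  | refl => exact .refl
  | tail _ h ih => exact ih.tail (.appL u h)

theorem stepsAppR (t : CTm) {u u' : CTm} (h : Relation.ReflTransGen Step u u') :
    Relation.ReflTransGen Step (app t u) (app t u') := by
  induction h with
  | refl => exact .refl
  | tail _ h ih => exact ih.tail (.appR t h)

theorem stepsLam (A : Ty) {t t' : CTm} (h : Relation.ReflTransGen Step t t') :
    Relation.ReflTransGen Step (lam A t) (lam A t') := by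
  induction h with
  | refl => exact .refl
  | tail _ h ih => exact ih.tail (.lam A h)

theorem steps_pstar : ∀ t : CTm, Relation.ReflTransGen Step t (pstar t)
  | var _ => .refl
  | lam A t => stepsLam A (steps_pstar t)
  | app (var n) b => stepsAppR _ (steps_pstar b)
  | app (lam A s) b =>
      (((stepsAppL b (stepsLam A (steps_pstar s))).trans
        (stepsAppR _ (steps_pstar b))).tail (Step.beta A (pstar s) (pstar b)))
  | app (app a₁ a₂) b =>
      (stepsAppL b (steps_pstar (app a₁ a₂))).trans (stepsAppR _ (steps_pstar b))

end CTm

/-- if all redexes of the simply typed term `t` have degree at most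
`d`, then the `d`-fold iterated parallel reduct of `t` is the β-normal form of
`t`: it is normal and reachable from `t` by β-reduction. -/
theorem pstar_iterate_normal_form {Γ : List Ty} {t : CTm} {A : Ty} {d : Nat}
    (ht : CTm.typeof Γ t = some A) (hb : CTm.RedexBound d Γ t) :
    CTm.Normal (CTm.pstar^[d] t) ∧
      Relation.ReflTransGen CTm.Step t (CTm.pstar^[d] t) := by
  induction d generalizing t A with
  | zero => exact ⟨CTm.normal_rb0 t ht hb, .refl⟩
  | succ d ih =>
      rw [Function.iterate_succ_apply]
      obtain ⟨h1, h2⟩ := ih (CTm.typeof_pstar t ht) (CTm.rb_pstar t ht hb)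
      exact ⟨h1, (CTm.steps_pstar t).trans h2⟩
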